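/- arXiv:1906.04577 — 3 statements merged into one kernel-verified Lean document; each statement's English description precedes it below -/
import Mathlib

section
/- For every d > 0, the derivative of r at d is negative if and only if d²·(k0 + k1) − 2·(ln τ)·(k0 − k1) > 0; it is positive if and only if d²·(k0 + k1) − 2·(ln τ)·(k0 − k1) < 0; and it is zero if and only if d²·(k0 + k1) − 2·(ln τ)·(k0 − k1) = 0. -/
set_option maxHeartbeats 1000000


/-- The Gaussian Q-function `Q(x) = (1/√(2π)) ∫_x^∞ exp(−t²/2) dt`. -/
noncomputable def gaussQ (x : ℝ) : ℝ :=
  (Real.sqrt (2 * Real.pi))⁻¹ * ∫ t in Set.Ioi x, Real.exp (-(t ^ 2 / 2))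

lemma gauss_integrable : MeasureTheory.Integrable (fun t : ℝ => Real.exp (-(t ^ 2 / 2))) := by
  have := integrable_exp_neg_mul_sq (show (0:ℝ) < 1/2 by norm_num)
  convert this using 2 with t
  ring_nf

lemma gaussQ_eq (x : ℝ) : gaussQ x = (Real.sqrt (2 * Real.pi))⁻¹ *
    ((∫ t : ℝ, Real.exp (-(t ^ 2 / 2))) - (∫ t in Set.Iic (0:ℝ), Real.exp (-(t ^ 2 / 2)))
      - ∫ t in (0:ℝ)..x, Real.exp (-(t ^ 2 / 2))) := by
  unfold gaussQ
  congr 1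
  have h1 : ∫ t in (0:ℝ)..x, Real.exp (-(t ^ 2 / 2))
      = (∫ t in Set.Iic x, Real.exp (-(t ^ 2 / 2)))
        - ∫ t in Set.Iic (0:ℝ), Real.exp (-(t ^ 2 / 2)) :=
    (intervalIntegral.integral_Iic_sub_Iic gauss_integrable.integrableOn
      gauss_integrable.integrableOn).symm
  have h2 : (∫ t in Set.Iic x, Real.exp (-(t ^ 2 / 2)))
      + ∫ t in Set.Ioi x, Real.exp (-(t ^ 2 / 2)) = ∫ t : ℝ, Real.exp (-(t ^ 2 / 2)) := by
    have := MeasureTheory.integral_add_compl (measurableSet_Iic (a := x)) gauss_integrable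
    simpa [Set.compl_Iic] using this
  rw [h1]
  linarith

lemma gaussQ_hasDerivAt (x : ℝ) :
    HasDerivAt gaussQ (-((Real.sqrt (2 * Real.pi))⁻¹ * Real.exp (-(x ^ 2 / 2)))) x := by
  have hcont : Continuous fun t : ℝ => Real.exp (-(t ^ 2 / 2)) := by continuity
  have hFTC : HasDerivAt (fun u => ∫ t in (0:ℝ)..u, Real.exp (-(t ^ 2 / 2)))
      (Real.exp (-(x ^ 2 / 2))) x :=
    intervalIntegral.integral_hasDerivAt_right
      (gauss_integrable.intervalIntegrable)
      (hcont.stronglyMeasurableAtFilter _ _)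
      hcont.continuousAt
  have h : HasDerivAt (fun x : ℝ => (Real.sqrt (2 * Real.pi))⁻¹ *
      ((∫ t : ℝ, Real.exp (-(t ^ 2 / 2))) - (∫ t in Set.Iic (0:ℝ), Real.exp (-(t ^ 2 / 2)))
        - ∫ t in (0:ℝ)..x, Real.exp (-(t ^ 2 / 2))))
      (-((Real.sqrt (2 * Real.pi))⁻¹ * Real.exp (-(x ^ 2 / 2)))) x := by
    have := ((hasDerivAt_const x ((∫ t : ℝ, Real.exp (-(t ^ 2 / 2)))
        - (∫ t in Set.Iic (0:ℝ), Real.exp (-(t ^ 2 / 2))))).sub hFTC).const_mul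
        ((Real.sqrt (2 * Real.pi))⁻¹)
    simpa [mul_comm, mul_left_comm, sub_sub] using this
  have heq : gaussQ = fun x : ℝ => (Real.sqrt (2 * Real.pi))⁻¹ *
      ((∫ t : ℝ, Real.exp (-(t ^ 2 / 2))) - (∫ t in Set.Iic (0:ℝ), Real.exp (-(t ^ 2 / 2)))
        - ∫ t in (0:ℝ)..x, Real.exp (-(t ^ 2 / 2))) := funext gaussQ_eq
  rw [heq]
  exact h

/-- Sign of the derivative of the transmitter Bayes risk `r` at `d > 0` is
determined by the sign of `d²·(k0 + k1) − 2·(ln τ)·(k0 − k1)`. -/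
theorem stmt_5 (π0 π1 C00 C01 C10 C11 τ ζ : ℝ)
    (hπ0 : 0 < π0) (hπ1 : 0 < π1) (hτ : 0 < τ) (hζ : ζ = 1 ∨ ζ = -1)
    (k0 k1 : ℝ)
    (hk0 : k0 = π0 * ζ * (C10 - C00) * τ ^ (-(1 / 2) : ℝ))
    (hk1 : k1 = π1 * ζ * (C01 - C11) * τ ^ ((1 / 2) : ℝ))
    (r : ℝ → ℝ)
    (hr : r = fun d : ℝ => π0 * C00 + π1 * C11
        + π0 * (C10 - C00) * gaussQ (ζ * (Real.log τ / d + d / 2))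
        + π1 * (C01 - C11) * gaussQ (ζ * (-Real.log τ / d + d / 2)))
    (d : ℝ) (hd : 0 < d) :
    (deriv r d < 0 ↔ d ^ 2 * (k0 + k1) - 2 * Real.log τ * (k0 - k1) > 0) ∧
    (deriv r d > 0 ↔ d ^ 2 * (k0 + k1) - 2 * Real.log τ * (k0 - k1) < 0) ∧
    (deriv r d = 0 ↔ d ^ 2 * (k0 + k1) - 2 * Real.log τ * (k0 - k1) = 0) := by
  have hd0 : d ≠ 0 := hd.ne'
  have hζ2 : ζ ^ 2 = 1 := by rcases hζ with rfl | rfl <;> norm_num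
  set L := Real.log τ with hL
  set c : ℝ := (Real.sqrt (2 * Real.pi))⁻¹ with hc
  have hcpos : 0 < c := by
    rw [hc]
    exact inv_pos.mpr (Real.sqrt_pos.mpr (by positivity))
  -- derivatives of the inner functions
  have hg0 : HasDerivAt (fun d : ℝ => ζ * (L / d + d / 2))
      (ζ * (-L / d ^ 2 + 1 / 2)) d := by
    have h1 : HasDerivAt (fun d : ℝ => L / d) (-L / d ^ 2) d := by
      have := (hasDerivAt_const d L).div (hasDerivAt_id d) hd0
      simpa [Pi.div_def] using this
    have h2 : HasDerivAt (fun d : ℝ => d / 2) (1 / 2) d := by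
      simpa using (hasDerivAt_id d).div_const 2
    exact (h1.add h2).const_mul ζ
  have hg1 : HasDerivAt (fun d : ℝ => ζ * (-L / d + d / 2))
      (ζ * (L / d ^ 2 + 1 / 2)) d := by
    have h1 : HasDerivAt (fun d : ℝ => -L / d) (L / d ^ 2) d := by
      have := (hasDerivAt_const d (-L)).div (hasDerivAt_id d) hd0
      simpa [neg_div, Pi.div_def] using this
    have h2 : HasDerivAt (fun d : ℝ => d / 2) (1 / 2) d := by
      simpa using (hasDerivAt_id d).div_const 2
    exact (h1.add h2).const_mul ζ
  -- derivative of r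
  have hQ0 := (gaussQ_hasDerivAt (ζ * (L / d + d / 2))).comp d hg0
  have hQ1 := (gaussQ_hasDerivAt (ζ * (-L / d + d / 2))).comp d hg1
  have hrd : HasDerivAt r
      (π0 * (C10 - C00) * (-(c * Real.exp (-((ζ * (L / d + d / 2)) ^ 2 / 2)))
          * (ζ * (-L / d ^ 2 + 1 / 2)))
        + π1 * (C01 - C11) * (-(c * Real.exp (-((ζ * (-L / d + d / 2)) ^ 2 / 2)))
          * (ζ * (L / d ^ 2 + 1 / 2)))) d := by
    rw [hr]
    have := (((hasDerivAt_const d (π0 * C00 + π1 * C11)).add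
        (hQ0.const_mul (π0 * (C10 - C00)))).add
        (hQ1.const_mul (π1 * (C01 - C11))))
    exact this.congr_deriv (by rw [hc]; ring)
  -- exponential simplifications
  have hτn : τ ^ (-(1 / 2) : ℝ) = Real.exp (L * (-(1/2))) := by
    rw [Real.rpow_def_of_pos hτ]
  have hτp : τ ^ ((1 / 2) : ℝ) = Real.exp (L * (1/2)) := by
    rw [Real.rpow_def_of_pos hτ]
  set M : ℝ := (L ^ 2 / d ^ 2 + d ^ 2 / 4) / 2 with hM
  have he0 : Real.exp (-((ζ * (L / d + d / 2)) ^ 2 / 2))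
      = Real.exp (-M) * Real.exp (L * (-(1/2))) := by
    rw [← Real.exp_add]
    congr 1
    have : (ζ * (L / d + d / 2)) ^ 2 = (L / d + d / 2) ^ 2 := by
      rw [mul_pow, hζ2, one_mul]
    rw [this, hM]
    field_simp
    ring
  have he1 : Real.exp (-((ζ * (-L / d + d / 2)) ^ 2 / 2))
      = Real.exp (-M) * Real.exp (L * (1/2)) := by
    rw [← Real.exp_add]
    congr 1
    have : (ζ * (-L / d + d / 2)) ^ 2 = (-L / d + d / 2) ^ 2 := by
      rw [mul_pow, hζ2, one_mul]
    rw [this, hM]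
    field_simp
    ring
  set E : ℝ := d ^ 2 * (k0 + k1) - 2 * L * (k0 - k1) with hE
  set P : ℝ := c * Real.exp (-M) / (2 * d ^ 2) with hP
  have hPpos : 0 < P := by
    rw [hP]
    positivity
  have hderiv : deriv r d = -(P * E) := by
    rw [hrd.deriv, he0, he1, hP, hE, hk0, hk1, hτn, hτp]
    have hζζ : ζ * ζ = 1 := by nlinarith [hζ2]
    field_simp
    nlinarith [hζ2, sq_nonneg d, sq_nonneg ζ]
  refine ⟨⟨fun h => ?_, fun h => ?_⟩, ⟨fun h => ?_, fun h => ?_⟩, ⟨fun h => ?_, fun h => ?_⟩⟩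
  · rw [hderiv] at h
    nlinarith
  · rw [hderiv]
    nlinarith
  · rw [hderiv] at h
    nlinarith
  · rw [hderiv]
    nlinarith
  · rw [hderiv] at h
    rcases mul_eq_zero.mp (neg_eq_zero.mp h) with h' | h'
    · exact absurd h' hPpos.ne'
    · exact h'
  · rw [hderiv, h, mul_zero, neg_zero]
end

section
/- (Nash best response of the transmitter.) Let σ > 0, a ≠ 0 be real, η ∈ ℝ, P0, P1 > 0, π0, π1 > 0, and suppose C10 ≠ C00 and C01 ≠ C11. Define f(S0, S1) = π0·(C10 − C00)·Q((η − a·S0)/(|a|·σ)) + π1·(C01 − C11)·Q(−(η − a·S1)/(|a|·σ)). Then for all real S0, S1 with S0² ≤ P0 and S1² ≤ P1, one has f(S0*, S1*) ≤ f(S0, S1), where S0* = −sgn(a)·sgn(C10 − C00)·√P0 and S1* = sgn(a)·sgn(C01 − C11)·√P1. -/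
lemma gaussQ_antitone : Antitone gaussQ := by
  intro x y hxy
  unfold gaussQ
  apply mul_le_mul_of_nonneg_left _ (inv_nonneg.mpr (Real.sqrt_nonneg _))
  have hi : MeasureTheory.IntegrableOn (fun t => Real.exp (-(t ^ 2 / 2))) (Set.Ioi x) := by
    have h2 : (fun t : ℝ => Real.exp (-(t ^ 2 / 2))) = fun t : ℝ => Real.exp (-(1/2) * t ^ 2) := by
      funext t; ring_nf
    rw [h2]
    exact (integrable_exp_neg_mul_sq (by norm_num : (0:ℝ) < 1/2)).integrableOn
  refine MeasureTheory.setIntegral_mono_set hi ?_ ?_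
  · exact Filter.Eventually.of_forall fun t => (Real.exp_pos _).le
  · exact HasSubset.Subset.eventuallyLE (Set.Ioi_subset_Ioi hxy)

lemma mul_gaussQ_le (c x y : ℝ) (h : 0 ≤ c * (x - y)) :
    c * gaussQ x ≤ c * gaussQ y := by
  rcases lt_trichotomy c 0 with hc | hc | hc
  · have hxy : x ≤ y := by nlinarith
    exact mul_le_mul_of_nonpos_left (gaussQ_antitone hxy) hc.le
  · simp [hc]
  · have hxy : y ≤ x := by nlinarith
    exact mul_le_mul_of_nonneg_left (gaussQ_antitone hxy) hc.le

/-- Nash best response of the transmitter to the single-threshold rule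
`a·y ≥ η`: the signal pair
`S0* = −sgn(a)·sgn(C10 − C00)·√P0`, `S1* = sgn(a)·sgn(C01 − C11)·√P1`
minimizes the transmitter's Bayes risk over the peak-power constraint set. -/
theorem stmt_14 (σ a η P0 P1 π0 π1 C00 C01 C10 C11 : ℝ)
    (hσ : 0 < σ) (ha : a ≠ 0) (hP0 : 0 < P0) (hP1 : 0 < P1)
    (hπ0 : 0 < π0) (hπ1 : 0 < π1)
    (hC0 : C10 ≠ C00) (hC1 : C01 ≠ C11)
    (f : ℝ → ℝ → ℝ)
    (hf : f = fun S0 S1 : ℝ =>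
      π0 * (C10 - C00) * gaussQ ((η - a * S0) / (|a| * σ))
        + π1 * (C01 - C11) * gaussQ (-((η - a * S1) / (|a| * σ)))) :
    ∀ S0 S1 : ℝ, S0 ^ 2 ≤ P0 → S1 ^ 2 ≤ P1 →
      f (-Real.sign a * Real.sign (C10 - C00) * Real.sqrt P0)
        (Real.sign a * Real.sign (C01 - C11) * Real.sqrt P1) ≤ f S0 S1 := by
  intro S0 S1 h0 h1
  subst hf
  simp only
  have hbpos : 0 < |a| * σ := mul_pos (abs_pos.mpr ha) hσ
  have hsa : a * Real.sign a = |a| := by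
    rcases ha.lt_or_gt with h | h
    · rw [Real.sign_of_neg h]; simp [abs_of_neg h]
    · rw [Real.sign_of_pos h]; simp [abs_of_pos h]
  have habs0 : |S0| ≤ Real.sqrt P0 := by
    rw [← Real.sqrt_sq_eq_abs]; exact Real.sqrt_le_sqrt h0
  have habs1 : |S1| ≤ Real.sqrt P1 := by
    rw [← Real.sqrt_sq_eq_abs]; exact Real.sqrt_le_sqrt h1
  have hS0u : a * S0 ≤ |a| * Real.sqrt P0 := by
    calc a * S0 ≤ |a * S0| := le_abs_self _
    _ = |a| * |S0| := abs_mul _ _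
    _ ≤ |a| * Real.sqrt P0 := mul_le_mul_of_nonneg_left habs0 (abs_nonneg a)
  have hS0l : -(|a| * Real.sqrt P0) ≤ a * S0 := by
    have := neg_abs_le (a * S0)
    rw [abs_mul] at this
    nlinarith [abs_nonneg a]
  have hS1u : a * S1 ≤ |a| * Real.sqrt P1 := by
    calc a * S1 ≤ |a * S1| := le_abs_self _
    _ = |a| * |S1| := abs_mul _ _
    _ ≤ |a| * Real.sqrt P1 := mul_le_mul_of_nonneg_left habs1 (abs_nonneg a)
  have hS1l : -(|a| * Real.sqrt P1) ≤ a * S1 := by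
    have := neg_abs_le (a * S1)
    rw [abs_mul] at this
    nlinarith [abs_nonneg a]
  have hC0' : C10 - C00 ≠ 0 := sub_ne_zero.mpr hC0
  have hC1' : C01 - C11 ≠ 0 := sub_ne_zero.mpr hC1
  refine add_le_add ?_ ?_
  · -- term 0
    apply mul_gaussQ_le
    have harg : a * (-Real.sign a * Real.sign (C10 - C00) * Real.sqrt P0)
        = -(|a| * (Real.sign (C10 - C00) * Real.sqrt P0)) := by
      rw [show a * (-Real.sign a * Real.sign (C10 - C00) * Real.sqrt P0)
          = -((a * Real.sign a) * (Real.sign (C10 - C00) * Real.sqrt P0)) from by ring, hsa]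
    have hnum : 0 ≤ π0 * (C10 - C00) *
        ((a * S0) - a * (-Real.sign a * Real.sign (C10 - C00) * Real.sqrt P0)) := by
      rw [harg]
      rcases hC0'.lt_or_gt with h | h
      · rw [Real.sign_of_neg h]
        nlinarith [mul_nonneg (mul_pos hπ0 (neg_pos.mpr h)).le (sub_nonneg.mpr hS0u)]
      · rw [Real.sign_of_pos h]
        nlinarith [mul_nonneg (mul_pos hπ0 h).le
          (by linarith : (0:ℝ) ≤ a * S0 + |a| * Real.sqrt P0)]
    have heq : π0 * (C10 - C00) *
        ((η - a * (-Real.sign a * Real.sign (C10 - C00) * Real.sqrt P0)) / (|a| * σ)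
          - (η - a * S0) / (|a| * σ))
        = π0 * (C10 - C00) *
          ((a * S0) - a * (-Real.sign a * Real.sign (C10 - C00) * Real.sqrt P0)) / (|a| * σ) := by
      field_simp
      ring
    rw [heq]
    exact div_nonneg hnum hbpos.le
  · -- term 1
    apply mul_gaussQ_le
    have harg : a * (Real.sign a * Real.sign (C01 - C11) * Real.sqrt P1)
        = |a| * (Real.sign (C01 - C11) * Real.sqrt P1) := by
      rw [show a * (Real.sign a * Real.sign (C01 - C11) * Real.sqrt P1)
          = (a * Real.sign a) * (Real.sign (C01 - C11) * Real.sqrt P1) from by ring, hsa]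
    have hnum : 0 ≤ π1 * (C01 - C11) *
        (a * (Real.sign a * Real.sign (C01 - C11) * Real.sqrt P1) - a * S1) := by
      rw [harg]
      rcases hC1'.lt_or_gt with h | h
      · rw [Real.sign_of_neg h]
        nlinarith [mul_nonneg (mul_pos hπ1 (neg_pos.mpr h)).le
          (by linarith : (0:ℝ) ≤ a * S1 + |a| * Real.sqrt P1)]
      · rw [Real.sign_of_pos h]
        nlinarith [mul_nonneg (mul_pos hπ1 h).le (sub_nonneg.mpr hS1u)]
    have heq : π1 * (C01 - C11) *
        (-((η - a * (Real.sign a * Real.sign (C01 - C11) * Real.sqrt P1)) / (|a| * σ))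
          - -((η - a * S1) / (|a| * σ)))
        = π1 * (C01 - C11) *
          (a * (Real.sign a * Real.sign (C01 - C11) * Real.sqrt P1) - a * S1) / (|a| * σ) := by
      field_simp
      ring
    rw [heq]
    exact div_nonneg hnum hbpos.le
end

section
/- (Optimal vector signal separation.) Let n ≥ 1, let Σ be a real symmetric positive definite n×n matrix with smallest eigenvalue λ_min, and let P0, P1 > 0. Then the greatest value of (S1 − S0)ᵀ Σ⁻¹ (S1 − S0) over all S0, S1 ∈ ℝⁿ with ‖S0‖² ≤ P0 and ‖S1‖² ≤ P1 equals (√P0 + √P1)²/λ_min; it is attained at S0 = −√P0·v and S1 = √P1·v, where v is a unit eigenvector of Σ corresponding to λ_min. -/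
open Matrix

open scoped RealInnerProductSpace

private lemma dot_eq_inner_aux {n : ℕ} (x y : EuclideanSpace ℝ (Fin n)) :
    (x : Fin n → ℝ) ⬝ᵥ (y : Fin n → ℝ) = ⟪x, y⟫ := by
  simp [dotProduct, PiLp.inner_apply, RCLike.inner_apply, mul_comm]

private lemma quad_bound {n : ℕ} (Sig : Matrix (Fin n) (Fin n) ℝ)
    (hSig : Sig.PosDef) (hSigSymm : Sig.IsSymm) (lammin : ℝ) (hl : 0 < lammin)
    (hmin : ∀ (μ : ℝ) (w : Fin n → ℝ), w ≠ 0 → Sig *ᵥ w = μ • w → lammin ≤ μ)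
    (w : Fin n → ℝ) : w ⬝ᵥ (Sig⁻¹ *ᵥ w) ≤ (w ⬝ᵥ w) / lammin := by
  classical
  have hH : Sig.IsHermitian := hSig.1
  have hdet : IsUnit Sig.det := hSig.det_pos.ne'.isUnit
  set b := hH.eigenvectorBasis with hb
  set μ := hH.eigenvalues with hμ
  have hμpos : ∀ i, 0 < μ i := hSig.eigenvalues_pos
  have hμge : ∀ i, lammin ≤ μ i := fun i =>
    hmin (μ i) (b i) (by simpa using b.orthonormal.ne_zero i) (hH.mulVec_eigenvectorBasis i)
  -- Sig⁻¹ acts on eigenvectors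
  have hinv : ∀ i, Sig⁻¹ *ᵥ ⇑(b i) = (μ i)⁻¹ • ⇑(b i) := by
    intro i
    have h1 : Sig⁻¹ *ᵥ (Sig *ᵥ ⇑(b i)) = ⇑(b i) := by
      rw [mulVec_mulVec, nonsing_inv_mul Sig hdet, one_mulVec]
    rw [hH.mulVec_eigenvectorBasis i, mulVec_smul] at h1
    conv_rhs => rw [← h1]
    rw [smul_smul, inv_mul_cancel₀ (hμpos i).ne', one_smul]
  -- symmetric inverse
  have hsyminv : (Sig⁻¹)ᵀ = Sig⁻¹ := by
    rw [transpose_nonsing_inv, hSigSymm.eq]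
  have hswap : ∀ (u : Fin n → ℝ), u ⬝ᵥ (Sig⁻¹ *ᵥ w) = (Sig⁻¹ *ᵥ u) ⬝ᵥ w := by
    intro u
    rw [dotProduct_mulVec, ← mulVec_transpose, hsyminv]
  set w' : EuclideanSpace ℝ (Fin n) := WithLp.toLp 2 w with hw'
  set z' : EuclideanSpace ℝ (Fin n) := WithLp.toLp 2 (Sig⁻¹ *ᵥ w) with hz'
  have key : w ⬝ᵥ (Sig⁻¹ *ᵥ w) = ∑ i, (μ i)⁻¹ * ⟪w', b i⟫ ^ 2 := by
    have := b.sum_inner_mul_inner w' z'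
    rw [show (w ⬝ᵥ (Sig⁻¹ *ᵥ w)) = ⟪w', z'⟫ from dot_eq_inner_aux w' z', ← this]
    refine Finset.sum_congr rfl fun i _ => ?_
    have hbi : ⟪b i, z'⟫ = (μ i)⁻¹ * ⟪w', b i⟫ := by
      rw [← dot_eq_inner_aux (b i) z']
      show ⇑(b i) ⬝ᵥ (Sig⁻¹ *ᵥ w) = _
      rw [hswap, hinv i, smul_dotProduct, smul_eq_mul]
      rw [show ⇑(b i) ⬝ᵥ w = ⟪w', b i⟫ by
        rw [← dot_eq_inner_aux w' (b i)]; exact dotProduct_comm _ _]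
    rw [hbi]; ring
  have key2 : w ⬝ᵥ w = ∑ i, ⟪w', b i⟫ ^ 2 := by
    have := b.sum_inner_mul_inner w' w'
    rw [show (w ⬝ᵥ w) = ⟪w', w'⟫ from dot_eq_inner_aux w' w', ← this]
    refine Finset.sum_congr rfl fun i _ => ?_
    rw [real_inner_comm (b i) w']; ring
  rw [key, key2, Finset.sum_div]
  refine Finset.sum_le_sum fun i _ => ?_
  rw [div_eq_inv_mul]
  exact mul_le_mul_of_nonneg_right
    ((inv_anti₀ hl (hμge i))) (sq_nonneg _)

/-- Optimal vector signal separation: the greatest value of the Mahalanobis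
separation `(S1 − S0)ᵀ Σ⁻¹ (S1 − S0)` over the peak-power constraints equals
`(√P0 + √P1)²/λ_min` and is attained along a unit eigenvector `v` of the
smallest eigenvalue `λ_min` of `Σ`, at `S0 = −√P0·v`, `S1 = √P1·v`. -/
theorem stmt_16 (n : ℕ) (hn : 1 ≤ n) (Sig : Matrix (Fin n) (Fin n) ℝ)
    (hSig : Sig.PosDef) (hSigSymm : Sig.IsSymm)
    (P0 P1 : ℝ) (hP0 : 0 < P0) (hP1 : 0 < P1)
    (lammin : ℝ) (v : Fin n → ℝ)
    (hv : Sig *ᵥ v = lammin • v) (hvunit : v ⬝ᵥ v = 1)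
    (hmin : ∀ (μ : ℝ) (w : Fin n → ℝ), w ≠ 0 → Sig *ᵥ w = μ • w → lammin ≤ μ) :
    IsGreatest
      {x : ℝ | ∃ S0 S1 : Fin n → ℝ, S0 ⬝ᵥ S0 ≤ P0 ∧ S1 ⬝ᵥ S1 ≤ P1 ∧
        x = (S1 - S0) ⬝ᵥ (Sig⁻¹ *ᵥ (S1 - S0))}
      ((Real.sqrt P0 + Real.sqrt P1) ^ 2 / lammin) ∧
    ((-(Real.sqrt P0) • v) ⬝ᵥ (-(Real.sqrt P0) • v) ≤ P0 ∧
      (Real.sqrt P1 • v) ⬝ᵥ (Real.sqrt P1 • v) ≤ P1 ∧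
      (Real.sqrt P1 • v - (-(Real.sqrt P0) • v)) ⬝ᵥ
          (Sig⁻¹ *ᵥ (Real.sqrt P1 • v - (-(Real.sqrt P0) • v)))
        = (Real.sqrt P0 + Real.sqrt P1) ^ 2 / lammin) := by
  classical
  have hv0 : v ≠ 0 := by
    intro h; rw [h] at hvunit; simp [dotProduct] at hvunit
  have hl : 0 < lammin := by
    have := hSig.dotProduct_mulVec_pos hv0
    rw [show star v = v from rfl, hv, dotProduct_smul, hvunit, smul_eq_mul, mul_one] at this
    exact this
  have hdet : IsUnit Sig.det := hSig.det_pos.ne'.isUnit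
  have hinvv : Sig⁻¹ *ᵥ v = lammin⁻¹ • v := by
    have h1 : Sig⁻¹ *ᵥ (Sig *ᵥ v) = v := by
      rw [mulVec_mulVec, nonsing_inv_mul Sig hdet, one_mulVec]
    rw [hv, mulVec_smul] at h1
    conv_rhs => rw [← h1]
    rw [smul_smul, inv_mul_cancel₀ hl.ne', one_smul]
  -- the attainment computation
  have hdiff : Real.sqrt P1 • v - (-(Real.sqrt P0) • v)
      = (Real.sqrt P0 + Real.sqrt P1) • v := by
    rw [neg_smul, sub_neg_eq_add, ← add_smul, add_comm]
  have hval : (Real.sqrt P1 • v - (-(Real.sqrt P0) • v)) ⬝ᵥ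
      (Sig⁻¹ *ᵥ (Real.sqrt P1 • v - (-(Real.sqrt P0) • v)))
      = (Real.sqrt P0 + Real.sqrt P1) ^ 2 / lammin := by
    rw [hdiff, mulVec_smul, hinvv, smul_dotProduct, dotProduct_smul, dotProduct_smul,
      hvunit]
    rw [smul_eq_mul, smul_eq_mul, smul_eq_mul, mul_one]
    field_simp
  have hS0 : (-(Real.sqrt P0) • v) ⬝ᵥ (-(Real.sqrt P0) • v) ≤ P0 := by
    rw [smul_dotProduct, dotProduct_smul, hvunit, smul_eq_mul, smul_eq_mul, mul_one,
      neg_mul_neg, Real.mul_self_sqrt hP0.le]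
  have hS1 : (Real.sqrt P1 • v) ⬝ᵥ (Real.sqrt P1 • v) ≤ P1 := by
    rw [smul_dotProduct, dotProduct_smul, hvunit, smul_eq_mul, smul_eq_mul, mul_one,
      Real.mul_self_sqrt hP1.le]
  refine ⟨⟨⟨-(Real.sqrt P0) • v, Real.sqrt P1 • v, hS0, hS1, hval.symm⟩, ?_⟩,
    hS0, hS1, hval⟩
  rintro x ⟨S0, S1, h0, h1, rfl⟩
  have hq := quad_bound Sig hSig hSigSymm lammin hl hmin (S1 - S0)
  refine hq.trans (div_le_div_of_nonneg_right ?_ hl.le)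
  -- need: (S1 - S0) ⬝ᵥ (S1 - S0) ≤ (√P0 + √P1)^2
  have h00 : 0 ≤ S0 ⬝ᵥ S0 := Finset.sum_nonneg fun i _ => mul_self_nonneg _
  have h11 : 0 ≤ S1 ⬝ᵥ S1 := Finset.sum_nonneg fun i _ => mul_self_nonneg _
  have hcs2 : (S0 ⬝ᵥ S1) ^ 2 ≤ (S0 ⬝ᵥ S0) * (S1 ⬝ᵥ S1) := by
    simpa [dotProduct, sq] using
      Finset.sum_mul_sq_le_sq_mul_sq Finset.univ S0 S1
  have hP0P1 : (S0 ⬝ᵥ S1) ^ 2 ≤ P0 * P1 :=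
    hcs2.trans (mul_le_mul h0 h1 h11 hP0.le)
  have hexp : (S1 - S0) ⬝ᵥ (S1 - S0)
      = S1 ⬝ᵥ S1 - 2 * (S0 ⬝ᵥ S1) + S0 ⬝ᵥ S0 := by
    rw [sub_dotProduct, dotProduct_sub, dotProduct_sub, dotProduct_comm S1 S0]
    ring
  rw [hexp]
  nlinarith [sq_nonneg (Real.sqrt P0 * Real.sqrt P1 + S0 ⬝ᵥ S1),
    Real.sq_sqrt hP0.le, Real.sq_sqrt hP1.le,
    Real.sqrt_nonneg P0, Real.sqrt_nonneg P1,
    mul_nonneg (Real.sqrt_nonneg P0) (Real.sqrt_nonneg P1), hP0P1, h0, h1]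
end
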